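/- Let E be a finite-dimensional real normed vector space, L_d : E × E → ℝ differentiable, and ξ : E → E a continuous linear endomorphism. Suppose L_d is invariant under the one-parameter group generated by ξ, i.e. L_d(exp(tξ)(q₀), exp(tξ)(q₁)) = L_d(q₀, q₁) for all t ∈ ℝ and all q₀, q₁ ∈ E, where exp denotes the exponential of continuous linear endomorphisms. Then for all q₀, q₁ ∈ E: D₁L_d(q₀, q₁)(ξ(q₀)) + D₂L_d(q₀, q₁)(ξ(q₁)) = 0; equivalently, the two discrete momentum maps J⁺(q₀,q₁) := D₂L_d(q₀,q₁)(ξ(q₁)) and J⁻(q₀,q₁) := −D₁L_d(q₀,q₁)(ξ(q₀)) coincide. -/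

import Mathlib

/-- **Equality of discrete momentum maps (discrete Noether identity).**
If a differentiable discrete Lagrangian is invariant under the one-parameter
group `exp(tξ)` generated by a continuous linear endomorphism `ξ`, then
`D₁L_d(q₀,q₁)(ξ q₀) + D₂L_d(q₀,q₁)(ξ q₁) = 0`, i.e. the two discrete momentum
maps `J⁺` and `J⁻` coincide. -/
theorem discrete_momentum_maps_coincide
    {E : Type*} [NormedAddCommGroup E] [NormedSpace ℝ E] [FiniteDimensional ℝ E]
    (L : E × E → ℝ) (hL : Differentiable ℝ L)
    (ξ : E →L[ℝ] E)
    (hinv : ∀ (t : ℝ) (q₀ q₁ : E),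
      L (NormedSpace.exp (t • ξ) q₀, NormedSpace.exp (t • ξ) q₁) = L (q₀, q₁)) :
    ∀ q₀ q₁ : E,
      fderiv ℝ (fun x => L (x, q₁)) q₀ (ξ q₀)
        + fderiv ℝ (fun y => L (q₀, y)) q₁ (ξ q₁) = 0
      ∧ fderiv ℝ (fun y => L (q₀, y)) q₁ (ξ q₁)
        = -(fderiv ℝ (fun x => L (x, q₁)) q₀ (ξ q₀)) := by
  intro q₀ q₁
  set f := fderiv ℝ L (q₀, q₁) with hf
  have hLf : HasFDerivAt L f (q₀, q₁) := (hL (q₀, q₁)).hasFDerivAt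
  -- derivative of t ↦ exp(t•ξ) applied to a point, at t = 0
  have hexp : ∀ q : E, HasDerivAt (fun t : ℝ => NormedSpace.exp (t • ξ) q) (ξ q) 0 := by
    intro q
    have h1 : HasDerivAt (fun t : ℝ => NormedSpace.exp (t • ξ))
        (NormedSpace.exp ((0 : ℝ) • ξ) * ξ) 0 := hasDerivAt_exp_smul_const ξ 0
    have h2 := h1.clm_apply (hasDerivAt_const (0 : ℝ) q)
    simpa [zero_smul, NormedSpace.exp_zero] using h2
  -- the orbit map t ↦ L(exp(tξ)q₀, exp(tξ)q₁) is constant, so its derivative vanishes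
  have horb : HasDerivAt (fun t : ℝ =>
      L (NormedSpace.exp (t • ξ) q₀, NormedSpace.exp (t • ξ) q₁))
      (f (ξ q₀, ξ q₁)) 0 := by
    have hpair : HasDerivAt (fun t : ℝ =>
        (NormedSpace.exp (t • ξ) q₀, NormedSpace.exp (t • ξ) q₁))
        (ξ q₀, ξ q₁) 0 := (hexp q₀).prodMk (hexp q₁)
    have hLf' : HasFDerivAt L f
        (NormedSpace.exp ((0:ℝ) • ξ) q₀, NormedSpace.exp ((0:ℝ) • ξ) q₁) := by
      simpa [zero_smul, NormedSpace.exp_zero] using hLf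
    exact hLf'.comp_hasDerivAt 0 hpair
  have hconst : HasDerivAt (fun t : ℝ =>
      L (NormedSpace.exp (t • ξ) q₀, NormedSpace.exp (t • ξ) q₁)) 0 0 := by
    have : (fun t : ℝ =>
        L (NormedSpace.exp (t • ξ) q₀, NormedSpace.exp (t • ξ) q₁))
        = fun _ => L (q₀, q₁) := funext fun t => hinv t q₀ q₁
    rw [this]; exact hasDerivAt_const 0 _
  have hzero : f (ξ q₀, ξ q₁) = 0 := horb.unique hconst
  -- partial derivatives as compositions
  have h1 : fderiv ℝ (fun x => L (x, q₁)) q₀ = f.comp (ContinuousLinearMap.inl ℝ E E) := by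
    exact (hLf.comp q₀ (hasFDerivAt_prodMk_left q₀ q₁)).fderiv
  have h2 : fderiv ℝ (fun y => L (q₀, y)) q₁ = f.comp (ContinuousLinearMap.inr ℝ E E) := by
    exact (hLf.comp q₁ (hasFDerivAt_prodMk_right q₀ q₁)).fderiv
  have key : fderiv ℝ (fun x => L (x, q₁)) q₀ (ξ q₀)
      + fderiv ℝ (fun y => L (q₀, y)) q₁ (ξ q₁) = 0 := by
    rw [h1, h2]
    have : ((ξ q₀, 0) : E × E) + (0, ξ q₁) = (ξ q₀, ξ q₁) := by simp
    simp only [ContinuousLinearMap.comp_apply, ContinuousLinearMap.inl_apply,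
      ContinuousLinearMap.inr_apply]
    rw [← map_add, this, hzero]
  exact ⟨key, by linarith⟩
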